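/- arXiv:1907.13223 — 5 statements merged into one kernel-verified Lean document; each statement's English description precedes it below -/
import Mathlib

section
/- Suppose A > 0 and θ > 0. If the threshold-crossing equation has a solution, i.e. there exists t ∈ ℝ with (A t − B) e^{−τ t} = θ, then −τ (θ/A) e^{τ B/A} ≥ −e^{−1}; in other words, whenever the spike-time equation is solvable, the argument of the Lambert W function in the closed-form spike-time formula is ≥ −e^{−1}. -/
/-- For `A > 0` and `θ > 0`, if the threshold-crossing equation `(A t − B) e^{−τ t} = θ`
has a solution, then the Lambert `W` argument satisfies `−τ (θ/A) e^{τ B/A} ≥ −e^{−1}`. -/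
theorem lambert_arg_valid_of_solvable {ι : Type*} (I : Finset ι) (w t : ι → ℝ)
    (τ θ : ℝ) (hτ : 0 < τ) (hθ : 0 < θ)
    (A B : ℝ)
    (hA : A = ∑ i ∈ I, w i * Real.exp (τ * t i))
    (hB : B = ∑ i ∈ I, w i * t i * Real.exp (τ * t i))
    (hApos : 0 < A)
    (hsol : ∃ s : ℝ, (A * s - B) * Real.exp (-τ * s) = θ) :
    -τ * (θ / A) * Real.exp (τ * (B / A)) ≥ -Real.exp (-1) := by
  obtain ⟨s, hs⟩ := hsol
  set x := τ * (s - B / A) with hx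
  have hxe : x ≤ Real.exp (x - 1) := by
    have := Real.add_one_le_exp (x - 1); linarith
  have key : x * Real.exp (-x) ≤ Real.exp (-1) := by
    calc x * Real.exp (-x) ≤ Real.exp (x - 1) * Real.exp (-x) :=
          mul_le_mul_of_nonneg_right hxe (Real.exp_pos _).le
      _ = Real.exp (-1) := by rw [← Real.exp_add]; ring_nf
  have heq : -τ * (θ / A) * Real.exp (τ * (B / A)) = -(x * Real.exp (-x)) := by
    rw [← hs, hx]
    rw [show -(τ * (s - B / A)) = -τ * s + τ * (B / A) by ring, Real.exp_add]
    field_simp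
  linarith
end

section
/- Suppose A > 0, θ > 0, and the peak potential satisfies (A/(τ e)) · e^{−τ B/A} ≥ θ. Then there exists a unique t ≤ t_max = B/A + 1/τ with (A t − B) e^{−τ t} = θ, and this t lies in the interval (B/A, t_max]; it is the earlier of the two potential solutions of the threshold equation (the one on the rising part of the membrane potential). -/
/-- For `A > 0`, `θ > 0`, and peak potential `(A/(τ e)) e^{−τ B/A} ≥ θ`, there exists a
unique `t ≤ t_max = B/A + 1/τ` with `(A t − B) e^{−τ t} = θ`, and this `t` lies in the
interval `(B/A, t_max]` (the solution on the rising part of the membrane potential). -/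
theorem rising_solution_exists_unique {ι : Type*} (I : Finset ι) (w t : ι → ℝ)
    (τ θ : ℝ) (hτ : 0 < τ) (hθ : 0 < θ)
    (A B : ℝ)
    (hA : A = ∑ i ∈ I, w i * Real.exp (τ * t i))
    (hB : B = ∑ i ∈ I, w i * t i * Real.exp (τ * t i))
    (hApos : 0 < A)
    (hpeak : A / (τ * Real.exp 1) * Real.exp (-τ * (B / A)) ≥ θ) :
    ∃ s : ℝ, (s ≤ B / A + 1 / τ ∧ (A * s - B) * Real.exp (-τ * s) = θ) ∧
      s ∈ Set.Ioc (B / A) (B / A + 1 / τ) ∧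
      ∀ s' : ℝ, s' ≤ B / A + 1 / τ → (A * s' - B) * Real.exp (-τ * s') = θ → s' = s := by
  set c := B / A with hc
  set m := B / A + 1 / τ with hm
  set f : ℝ → ℝ := fun x => (A * x - B) * Real.exp (-τ * x) with hf
  have hτ0 : τ ≠ 0 := ne_of_gt hτ
  have hA0 : A ≠ 0 := ne_of_gt hApos
  have hcm : c < m := by
    have h1 : 0 < 1 / τ := by positivity
    rw [hc, hm]; linarith
  have hderiv : ∀ x : ℝ, HasDerivAt f ((A - τ * (A * x - B)) * Real.exp (-τ * x)) x := by
    intro x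
    have h1 : HasDerivAt (fun s : ℝ => A * s - B) A x := by
      simpa using ((hasDerivAt_id x).const_mul A).sub_const B
    have hg : HasDerivAt (fun s : ℝ => -τ * s) (-τ) x := by
      have := (hasDerivAt_id x).const_mul (-τ)
      simp only [mul_one] at this
      exact this
    have h2 : HasDerivAt (fun s : ℝ => Real.exp (-τ * s)) (Real.exp (-τ * x) * -τ) x :=
      (Real.hasDerivAt_exp (-τ * x)).comp x hg
    have := h1.mul h2
    refine this.congr_deriv ?_
    ring
  have hcont : Continuous f := by
    apply Continuous.mul
    · continuity
    · exact Real.continuous_exp.comp (by continuity)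
  have hmono : StrictMonoOn f (Set.Iic m) := by
    apply strictMonoOn_of_deriv_pos (convex_Iic m) hcont.continuousOn
    intro x hx
    rw [interior_Iic, Set.mem_Iio] at hx
    rw [(hderiv x).deriv]
    have hAm : A * m = B + A / τ := by rw [hm]; field_simp
    have hx' : A * x < B + A / τ := by
      have h := mul_lt_mul_of_pos_left hx hApos
      rw [hAm] at h
      exact h
    have h2 : τ * (A * x - B) < A := by
      have := mul_lt_mul_of_pos_left (show A * x - B < A / τ by linarith) hτ
      have hAτ : τ * (A / τ) = A := by field_simp
      linarith [this]
    have h3 : 0 < A - τ * (A * x - B) := by linarith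
    positivity
  have hfc : f c = 0 := by
    rw [hf]; simp only [hc]
    have : A * (B / A) - B = 0 := by field_simp; ring
    rw [this, zero_mul]
  have hfm : f m = A / (τ * Real.exp 1) * Real.exp (-τ * (B / A)) := by
    rw [hf]; simp only [hm]
    have h1 : A * (B / A + 1 / τ) - B = A / τ := by field_simp; ring
    have h2 : -τ * (B / A + 1 / τ) = -τ * (B / A) + -1 := by field_simp; ring
    rw [h1, h2, Real.exp_add, Real.exp_neg]
    rw [div_mul_eq_div_div, div_eq_mul_inv (A / τ)]
    ring
  have hθm : θ ∈ Set.Ioc (f c) (f m) := by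
    rw [hfc, hfm]; exact ⟨hθ, hpeak⟩
  have := intermediate_value_Ioc (le_of_lt hcm) hcont.continuousOn hθm
  obtain ⟨s, hsmem, hsval⟩ := this
  refine ⟨s, ⟨hsmem.2, hsval⟩, hsmem, ?_⟩
  intro s' hs' hval'
  have hs'c : c < s' := by
    by_contra h
    push_neg at h
    have h1 : A * s' - B ≤ 0 := by
      have := mul_le_mul_of_nonneg_left h (le_of_lt hApos)
      have hAc : A * c = B := by rw [hc]; field_simp
      linarith [this]
    have h2 : (A * s' - B) * Real.exp (-τ * s') ≤ 0 :=
      mul_nonpos_of_nonpos_of_nonneg h1 (Real.exp_nonneg _)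
    rw [hval'] at h2
    linarith
  have : f s' = f s := hval'.trans hsval.symm
  exact hmono.injOn (Set.mem_Iic.2 hs') (Set.mem_Iic.2 hsmem.2) this
end

section
/- Suppose A > 0, θ > 0, and the peak potential strictly exceeds the threshold, i.e. (A/(τ e)) · e^{−τ B/A} > θ. Then the equation (A t − B) e^{−τ t} = θ has exactly two real solutions: one in the open interval (B/A, t_max) (on the rising part of the membrane potential) and one in (t_max, ∞) (on the decaying part), where t_max = B/A + 1/τ. -/
/-- For `A > 0`, `θ > 0`, if the peak potential strictly exceeds the threshold,
`(A/(τ e)) e^{−τ B/A} > θ`, then `(A t − B) e^{−τ t} = θ` has exactly two real solutions: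
one in `(B/A, t_max)` (rising part) and one in `(t_max, ∞)` (decaying part),
where `t_max = B/A + 1/τ`. -/
theorem two_threshold_solutions {ι : Type*} (I : Finset ι) (w t : ι → ℝ)
    (τ θ : ℝ) (hτ : 0 < τ) (hθ : 0 < θ)
    (A B : ℝ)
    (hA : A = ∑ i ∈ I, w i * Real.exp (τ * t i))
    (hB : B = ∑ i ∈ I, w i * t i * Real.exp (τ * t i))
    (hApos : 0 < A)
    (hpeak : A / (τ * Real.exp 1) * Real.exp (-τ * (B / A)) > θ) :
    ∃ t₁ t₂ : ℝ,
      t₁ ∈ Set.Ioo (B / A) (B / A + 1 / τ) ∧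
      t₂ ∈ Set.Ioi (B / A + 1 / τ) ∧
      (A * t₁ - B) * Real.exp (-τ * t₁) = θ ∧
      (A * t₂ - B) * Real.exp (-τ * t₂) = θ ∧
      ∀ s : ℝ, (A * s - B) * Real.exp (-τ * s) = θ → s = t₁ ∨ s = t₂ := by
  have hAne : A ≠ 0 := ne_of_gt hApos
  have hτne : τ ≠ 0 := ne_of_gt hτ
  set m : ℝ := B / A with hm
  set tmax : ℝ := B / A + 1 / τ with htm
  set f : ℝ → ℝ := fun x => (A * x - B) * Real.exp (-τ * x) with hf
  have hcont : Continuous f := by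
    apply Continuous.mul
    · fun_prop
    · fun_prop
  have hderiv : ∀ x : ℝ, HasDerivAt f (A * τ * (tmax - x) * Real.exp (-τ * x)) x := by
    intro x
    have h1 : HasDerivAt (fun x : ℝ => A * x - B) A x := by
      simpa using ((hasDerivAt_id x).const_mul A).sub_const B
    have h2 : HasDerivAt (fun x : ℝ => Real.exp (-τ * x)) (-τ * Real.exp (-τ * x)) x := by
      have := ((hasDerivAt_id x).const_mul (-τ)).exp
      simpa [mul_comm] using this
    have h3 := h1.mul h2
    refine h3.congr_deriv ?_
    have key : A * τ * (tmax - x) = A + (A * x - B) * (-τ) := by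
      simp only [htm]
      field_simp
      ring
    rw [show A * τ * (tmax - x) * Real.exp (-τ * x)
        = (A + (A * x - B) * (-τ)) * Real.exp (-τ * x) from by rw [key]]
    ring
  have hmlt : m < tmax := by
    rw [htm, hm]
    have : 0 < 1 / τ := by positivity
    linarith
  have hderiv' : ∀ x : ℝ, deriv f x = A * τ * (tmax - x) * Real.exp (-τ * x) :=
    fun x => (hderiv x).deriv
  have hmono : StrictMonoOn f (Set.Icc m tmax) := by
    apply strictMonoOn_of_deriv_pos (convex_Icc _ _) hcont.continuousOn
    intro x hx
    rw [interior_Icc] at hx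
    rw [hderiv']
    have h1 : 0 < tmax - x := by linarith [hx.2]
    have h2 := Real.exp_pos (-τ * x)
    positivity
  have hanti : StrictAntiOn f (Set.Ici tmax) := by
    apply strictAntiOn_of_deriv_neg (convex_Ici _) hcont.continuousOn
    intro x hx
    rw [interior_Ici] at hx
    rw [hderiv']
    have h1 : tmax - x < 0 := by simp only [Set.mem_Ioi] at hx; linarith
    have h2 := Real.exp_pos (-τ * x)
    exact mul_neg_of_neg_of_pos (mul_neg_of_pos_of_neg (mul_pos hApos hτ) h1) h2
  have hfm : f m = 0 := by
    simp only [hf, hm]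
    field_simp
    ring
  have hftmax : f tmax = A / (τ * Real.exp 1) * Real.exp (-τ * m) := by
    simp only [hf]
    have h1 : -τ * tmax = -τ * m + (-1) := by
      simp only [htm, hm]
      field_simp
      ring
    have h2 : A * tmax - B = A / τ := by
      simp only [htm, hm]
      field_simp
      ring
    rw [h1, h2, Real.exp_add, Real.exp_neg]
    rw [div_mul_eq_div_div]
    field_simp [Real.exp_ne_zero]
    try ring
  have hpk : θ < f tmax := by rw [hftmax]; exact hpeak
  -- existence of t₁
  obtain ⟨t₁, ht₁mem, ht₁⟩ : ∃ t₁ ∈ Set.Ioo m tmax, f t₁ = θ := by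
    have := intermediate_value_Ioo (le_of_lt hmlt) hcont.continuousOn
    have hθmem : θ ∈ Set.Ioo (f m) (f tmax) := by
      rw [hfm]; exact ⟨hθ, hpk⟩
    obtain ⟨x, hx, hfx⟩ := this hθmem
    exact ⟨x, hx, hfx⟩
  -- f tends to 0 at infinity
  have htend : Filter.Tendsto f Filter.atTop (nhds 0) := by
    have hcomp : Filter.Tendsto (fun x : ℝ => τ * x) Filter.atTop Filter.atTop :=
      Filter.tendsto_atTop_atTop_of_monotone (fun a b hab => by nlinarith)
        (fun b => ⟨b / τ, by field_simp; exact le_rfl⟩)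
    have h1 : Filter.Tendsto (fun x : ℝ => (τ * x) * Real.exp (-(τ * x))) Filter.atTop (nhds 0) :=
      ((Real.tendsto_pow_mul_exp_neg_atTop_nhds_zero 1).comp hcomp).congr (by intro x; simp)
    have h2 : Filter.Tendsto (fun x : ℝ => Real.exp (-(τ * x))) Filter.atTop (nhds 0) :=
      (Real.tendsto_exp_neg_atTop_nhds_zero).comp hcomp
    have h3 : Filter.Tendsto (fun x : ℝ => (A / τ) * ((τ * x) * Real.exp (-(τ * x)))
        - B * Real.exp (-(τ * x))) Filter.atTop (nhds ((A / τ) * 0 - B * 0)) :=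
      (h1.const_mul (A / τ)).sub (h2.const_mul B)
    simp only [mul_zero, sub_zero] at h3
    apply h3.congr
    intro x
    rw [hf]
    simp only []
    rw [neg_mul]
    field_simp
  -- find T > tmax with f T < θ
  obtain ⟨T, hT1, hT2⟩ : ∃ T, tmax < T ∧ f T < θ := by
    have h1 : ∀ᶠ x in Filter.atTop, f x < θ := htend.eventually_lt_const hθ
    have h2 : ∀ᶠ x in Filter.atTop, tmax < x := Filter.eventually_gt_atTop tmax
    obtain ⟨T, hT⟩ := (h1.and h2).exists
    exact ⟨T, hT.2, hT.1⟩
  -- existence of t₂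
  obtain ⟨t₂, ht₂mem, ht₂⟩ : ∃ t₂ ∈ Set.Ioo tmax T, f t₂ = θ := by
    have := intermediate_value_Ioo' (le_of_lt hT1) hcont.continuousOn
    have hθmem : θ ∈ Set.Ioo (f T) (f tmax) := ⟨hT2, hpk⟩
    obtain ⟨x, hx, hfx⟩ := this hθmem
    exact ⟨x, hx, hfx⟩
  refine ⟨t₁, t₂, ht₁mem, Set.mem_Ioi.mpr ht₂mem.1, ht₁, ht₂, ?_⟩
  intro s hs
  have hsgt : m < s := by
    have hep := Real.exp_pos (-τ * s)
    have h1 : 0 < A * s - B := by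
      by_contra h
      push_neg at h
      nlinarith
    rw [hm]
    rw [div_lt_iff₀ hApos]
    nlinarith
  rcases le_or_gt s tmax with hcase | hcase
  · left
    have hsmem : s ∈ Set.Icc m tmax := ⟨le_of_lt hsgt, hcase⟩
    have ht₁mem' : t₁ ∈ Set.Icc m tmax := ⟨le_of_lt ht₁mem.1, le_of_lt ht₁mem.2⟩
    exact hmono.injOn hsmem ht₁mem' (by rw [ht₁]; exact hs)
  · right
    have hsmem : s ∈ Set.Ici tmax := le_of_lt hcase
    have ht₂mem' : t₂ ∈ Set.Ici tmax := le_of_lt ht₂mem.1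
    exact hanti.injOn hsmem ht₂mem' (by rw [ht₂]; exact hs)
end

section
/- Fix j ∈ I and let t_out ∈ ℝ satisfy V(t_out) = θ. Suppose g : ℝ → ℝ is differentiable at w_j with g(w_j) = t_out, and for all w in a neighborhood of w_j it holds that Σ_{i∈I, i≠j} w_i (g(w) − t_i) e^{τ(t_i − g(w))} + w (g(w) − t_j) e^{τ(t_j − g(w))} = θ (i.e., g(w) is the spike time when the weight of input j is w). If A + τ(B − A t_out) ≠ 0, then the derivative of the spike time with respect to the weight w_j is g'(w_j) = e^{τ t_j} (t_j − t_out) / (A + τ(B − A t_out)). -/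
/-- Derivative of the spike time with respect to the weight `w j`.  If `g v` is the spike
time when the weight of input `j` is `v` (i.e. it satisfies the threshold equation on a
neighborhood of `w j`), `g (w j) = t_out`, `V (t_out) = θ`, and the denominator
`A + τ(B − A t_out)` is nonzero, then
`g'(w j) = e^{τ t_j} (t_j − t_out) / (A + τ(B − A t_out))`. -/
theorem spike_time_deriv_weight {ι : Type*} [DecidableEq ι] (I : Finset ι) (w t : ι → ℝ)
    (τ θ : ℝ) (hτ : 0 < τ) (hθ : 0 < θ)
    (A B : ℝ)
    (hA : A = ∑ i ∈ I, w i * Real.exp (τ * t i))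
    (hB : B = ∑ i ∈ I, w i * t i * Real.exp (τ * t i))
    (j : ι) (hj : j ∈ I)
    (tout : ℝ)
    (hVout : (∑ i ∈ I, w i * (tout - t i) * Real.exp (τ * (t i - tout))) = θ)
    (g : ℝ → ℝ) (hg : DifferentiableAt ℝ g (w j)) (hgw : g (w j) = tout)
    (hloc : ∀ᶠ v in nhds (w j),
      (∑ i ∈ I.erase j, w i * (g v - t i) * Real.exp (τ * (t i - g v))) +
        v * (g v - t j) * Real.exp (τ * (t j - g v)) = θ)
    (hden : A + τ * (B - A * tout) ≠ 0) :
    deriv g (w j) =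
      Real.exp (τ * t j) * (t j - tout) / (A + τ * (B - A * tout)) := by
  set c := deriv g (w j) with hc
  have hgd : HasDerivAt g c (w j) := hg.hasDerivAt
  -- derivative of the basic building block
  have key : ∀ s : ℝ, HasDerivAt (fun v => (g v - s) * Real.exp (τ * (s - g v)))
      (c * Real.exp (τ * (s - tout)) * (1 - τ * (tout - s))) (w j) := by
    intro s
    have h1 : HasDerivAt (fun v => g v - s) c (w j) := hgd.sub_const s
    have h0 : HasDerivAt (fun v => τ * (s - g v)) (τ * (-c)) (w j) :=
      (hgd.const_sub s).const_mul τ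
    have h2 := h0.exp
    have h3 : HasDerivAt (fun v => (g v - s) * Real.exp (τ * (s - g v))) _ (w j) := h1.mul h2
    convert h3 using 1
    rw [hgw]; ring
  -- derivative of the whole local equation
  have hsum : HasDerivAt
      (fun v => ∑ i ∈ I.erase j, w i * ((g v - t i) * Real.exp (τ * (t i - g v))))
      (∑ i ∈ I.erase j, w i * (c * Real.exp (τ * (t i - tout)) * (1 - τ * (tout - t i))))
      (w j) :=
    HasDerivAt.fun_sum (fun i _ => (key (t i)).const_mul (w i))
  have hjterm : HasDerivAt (fun v => v * ((g v - t j) * Real.exp (τ * (t j - g v))))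
      (1 * ((g (w j) - t j) * Real.exp (τ * (t j - g (w j)))) +
        w j * (c * Real.exp (τ * (t j - tout)) * (1 - τ * (tout - t j)))) (w j) :=
    (hasDerivAt_id (w j)).mul (key (t j))
  have hD : HasDerivAt
      (fun v => (∑ i ∈ I.erase j, w i * (g v - t i) * Real.exp (τ * (t i - g v))) +
        v * (g v - t j) * Real.exp (τ * (t j - g v)))
      ((∑ i ∈ I.erase j, w i * (c * Real.exp (τ * (t i - tout)) * (1 - τ * (tout - t i)))) +
        (1 * ((g (w j) - t j) * Real.exp (τ * (t j - g (w j)))) +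
        w j * (c * Real.exp (τ * (t j - tout)) * (1 - τ * (tout - t j))))) (w j) := by
    have : HasDerivAt (fun v => (∑ i ∈ I.erase j, w i * ((g v - t i) * Real.exp (τ * (t i - g v)))) +
        v * ((g v - t j) * Real.exp (τ * (t j - g v)))) _ (w j) := hsum.add hjterm
    convert this using 2 with v
    simp [mul_assoc]
  have h0 : HasDerivAt
      (fun v => (∑ i ∈ I.erase j, w i * (g v - t i) * Real.exp (τ * (t i - g v))) +
        v * (g v - t j) * Real.exp (τ * (t j - g v))) 0 (w j) := by
    have hconst : HasDerivAt (fun _ : ℝ => θ) 0 (w j) := hasDerivAt_const _ _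
    exact hconst.congr_of_eventuallyEq (by filter_upwards [hloc] with v hv using hv)
  have hD0 : (∑ i ∈ I.erase j, w i * (c * Real.exp (τ * (t i - tout)) * (1 - τ * (tout - t i)))) +
      (1 * ((g (w j) - t j) * Real.exp (τ * (t j - g (w j)))) +
        w j * (c * Real.exp (τ * (t j - tout)) * (1 - τ * (tout - t j)))) = 0 :=
    hD.unique h0
  rw [hgw] at hD0
  -- combine the erased sum and the j-term into a full sum
  have hfull : (∑ i ∈ I.erase j, w i * (c * Real.exp (τ * (t i - tout)) * (1 - τ * (tout - t i)))) +
      w j * (c * Real.exp (τ * (t j - tout)) * (1 - τ * (tout - t j))) =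
      ∑ i ∈ I, w i * (c * Real.exp (τ * (t i - tout)) * (1 - τ * (tout - t i))) :=
    Finset.sum_erase_add I _ hj
  have hD0' : (∑ i ∈ I, w i * (c * Real.exp (τ * (t i - tout)) * (1 - τ * (tout - t i)))) +
      (tout - t j) * Real.exp (τ * (t j - tout)) = 0 := by
    rw [← hfull]; linarith [hD0]
  -- evaluate the sum
  have hS : ∑ i ∈ I, w i * (c * Real.exp (τ * (t i - tout)) * (1 - τ * (tout - t i))) =
      c * Real.exp (-(τ * tout)) * (A + τ * (B - A * tout)) := by
    have hterm : ∀ i ∈ I, w i * (c * Real.exp (τ * (t i - tout)) * (1 - τ * (tout - t i))) =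
        (c * Real.exp (-(τ * tout)) * (1 - τ * tout)) * (w i * Real.exp (τ * t i)) +
          (c * Real.exp (-(τ * tout)) * τ) * (w i * t i * Real.exp (τ * t i)) := by
      intro i _
      rw [show τ * (t i - tout) = τ * t i + -(τ * tout) by ring, Real.exp_add]
      ring
    rw [Finset.sum_congr rfl hterm, Finset.sum_add_distrib, ← Finset.mul_sum, ← Finset.mul_sum,
      ← hA, ← hB]
    ring
  rw [hS] at hD0'
  have hexp : Real.exp (-(τ * tout)) ≠ 0 := Real.exp_ne_zero _
  have hEj : Real.exp (τ * (t j - tout)) = Real.exp (τ * t j) * Real.exp (-(τ * tout)) := by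
    rw [← Real.exp_add]; ring_nf
  rw [hEj] at hD0'
  have hkey : (c * (A + τ * (B - A * tout)) - Real.exp (τ * t j) * (t j - tout)) *
      Real.exp (-(τ * tout)) = 0 := by
    have hre : (c * (A + τ * (B - A * tout)) - Real.exp (τ * t j) * (t j - tout)) *
        Real.exp (-(τ * tout)) =
        c * Real.exp (-(τ * tout)) * (A + τ * (B - A * tout)) +
          (tout - t j) * (Real.exp (τ * t j) * Real.exp (-(τ * tout))) := by ring
    rw [hre, hD0']
  have h2 := sub_eq_zero.mp ((mul_eq_zero.mp hkey).resolve_right hexp)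
  exact (eq_div_iff hden).mpr h2
end

section
/- Fix j ∈ I and let t_out ∈ ℝ satisfy V(t_out) = θ. Suppose h : ℝ → ℝ is differentiable at t_j with h(t_j) = t_out, and for all s in a neighborhood of t_j it holds that Σ_{i∈I, i≠j} w_i (h(s) − t_i) e^{τ(t_i − h(s))} + w_j (h(s) − s) e^{τ(s − h(s))} = θ (i.e., h(s) is the spike time when the presynaptic spike time of input j is s). If A + τ(B − A t_out) ≠ 0, then the derivative of the spike time with respect to the presynaptic spike time t_j is h'(t_j) = w_j e^{τ t_j} (1 + τ(t_j − t_out)) / (A + τ(B − A t_out)). -/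
/-- Derivative of the spike time with respect to the presynaptic spike time `t j`.  If
`h s` is the spike time when the presynaptic spike time of input `j` is `s` (i.e. it
satisfies the threshold equation on a neighborhood of `t j`), `h (t j) = t_out`,
`V (t_out) = θ`, and the denominator `A + τ(B − A t_out)` is nonzero, then
`h'(t j) = w_j e^{τ t_j} (1 + τ(t_j − t_out)) / (A + τ(B − A t_out))`. -/
theorem spike_time_deriv_time {ι : Type*} [DecidableEq ι] (I : Finset ι) (w t : ι → ℝ)
    (τ θ : ℝ) (hτ : 0 < τ) (hθ : 0 < θ)
    (A B : ℝ)
    (hA : A = ∑ i ∈ I, w i * Real.exp (τ * t i))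
    (hB : B = ∑ i ∈ I, w i * t i * Real.exp (τ * t i))
    (j : ι) (hj : j ∈ I)
    (tout : ℝ)
    (hVout : (∑ i ∈ I, w i * (tout - t i) * Real.exp (τ * (t i - tout))) = θ)
    (h : ℝ → ℝ) (hh : DifferentiableAt ℝ h (t j)) (hhw : h (t j) = tout)
    (hloc : ∀ᶠ s in nhds (t j),
      (∑ i ∈ I.erase j, w i * (h s - t i) * Real.exp (τ * (t i - h s))) +
        w j * (h s - s) * Real.exp (τ * (s - h s)) = θ)
    (hden : A + τ * (B - A * tout) ≠ 0) :
    deriv h (t j) =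
      w j * Real.exp (τ * t j) * (1 + τ * (t j - tout)) / (A + τ * (B - A * tout)) := by
  subst hhw
  set h' := deriv h (t j) with hh'
  have hd : HasDerivAt h h' (t j) := hh.hasDerivAt
  set p := h (t j) with hp
  -- derivative of each non-j term
  have hterm : ∀ i, HasDerivAt (fun s => w i * (h s - t i) * Real.exp (τ * (t i - h s)))
      (h' * (w i * Real.exp (τ * (t i - p)) * (1 - τ * (p - t i)))) (t j) := by
    intro i
    have h1 : HasDerivAt (fun x : ℝ => w i * (x - t i)) (w i * 1) p :=
      ((hasDerivAt_id p).sub_const _).const_mul _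
    have h2 : HasDerivAt (fun x : ℝ => Real.exp (τ * (t i - x)))
        (Real.exp (τ * (t i - p)) * (τ * (0 - 1))) p :=
      (((hasDerivAt_const p (t i)).sub (hasDerivAt_id p)).const_mul τ).exp
    have h3 := (h1.fun_mul h2).comp (t j) hd
    refine h3.congr_deriv ?_
    ring
  -- derivative of the j-th term
  have htj : HasDerivAt (fun s => w j * (h s - s) * Real.exp (τ * (s - h s)))
      ((h' - 1) * (w j * Real.exp (τ * (t j - p)) * (1 - τ * (p - t j)))) (t j) := by
    have h1 : HasDerivAt (fun s => w j * (h s - s)) (w j * (h' - 1)) (t j) :=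
      (hd.sub (hasDerivAt_id (t j))).const_mul _
    have h2 : HasDerivAt (fun s => Real.exp (τ * (s - h s)))
        (Real.exp (τ * (t j - p)) * (τ * (1 - h'))) (t j) :=
      (((hasDerivAt_id (t j)).sub hd).const_mul τ).exp
    have h3 := h1.fun_mul h2
    refine h3.congr_deriv ?_
    ring
  have hsum : HasDerivAt
      (fun s => (∑ i ∈ I.erase j, w i * (h s - t i) * Real.exp (τ * (t i - h s))) +
        w j * (h s - s) * Real.exp (τ * (s - h s)))
      ((∑ i ∈ I.erase j, h' * (w i * Real.exp (τ * (t i - p)) * (1 - τ * (p - t i)))) +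
        (h' - 1) * (w j * Real.exp (τ * (t j - p)) * (1 - τ * (p - t j)))) (t j) :=
    (HasDerivAt.fun_sum fun i _ => hterm i).add htj
  have hzero : ((∑ i ∈ I.erase j, h' * (w i * Real.exp (τ * (t i - p)) * (1 - τ * (p - t i)))) +
      (h' - 1) * (w j * Real.exp (τ * (t j - p)) * (1 - τ * (p - t j)))) = 0 := by
    have heq : (fun s => (∑ i ∈ I.erase j, w i * (h s - t i) * Real.exp (τ * (t i - h s))) +
        w j * (h s - s) * Real.exp (τ * (s - h s))) =ᶠ[nhds (t j)] fun _ => θ := hloc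
    have := heq.deriv_eq
    rw [deriv_const] at this
    rw [← hsum.deriv, this]
  -- rewrite the sum over erase as full sum minus j term
  set c : ι → ℝ := fun i => w i * Real.exp (τ * (t i - p)) * (1 - τ * (p - t i)) with hc
  have hzero2 : h' * (∑ i ∈ I, c i) = c j := by
    have he : ∑ i ∈ I.erase j, h' * c i = h' * ((∑ i ∈ I, c i) - c j) := by
      rw [← Finset.mul_sum, Finset.sum_erase_eq_sub hj]
    rw [he] at hzero
    simp only [hc] at hzero ⊢
    linear_combination hzero
  have hS : (∑ i ∈ I, c i) = Real.exp (-(τ * p)) * (A + τ * (B - A * p)) := by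
    have hrhs : A + τ * (B - A * p)
        = ∑ i ∈ I, (w i * Real.exp (τ * t i) * (1 + τ * (t i - p))) := by
      rw [hA, hB, Finset.sum_mul, ← Finset.sum_sub_distrib, Finset.mul_sum,
        ← Finset.sum_add_distrib]
      exact Finset.sum_congr rfl fun i _ => by ring
    rw [hrhs, Finset.mul_sum]
    refine Finset.sum_congr rfl fun i _ => ?_
    simp only [hc]
    rw [show τ * (t i - p) = τ * t i + (-(τ * p)) by ring, Real.exp_add]
    ring
  have hE : Real.exp (-(τ * p)) ≠ 0 := Real.exp_ne_zero _
  have hcj : c j = Real.exp (-(τ * p)) * (w j * Real.exp (τ * t j) * (1 + τ * (t j - p))) := by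
    simp only [hc]
    rw [show τ * (t j - p) = τ * t j + (-(τ * p)) by ring, Real.exp_add]
    ring
  rw [hS, hcj] at hzero2
  have key := mul_left_cancel₀ hE (show Real.exp (-(τ * p)) * (h' * (A + τ * (B - A * p)))
      = Real.exp (-(τ * p)) * (w j * Real.exp (τ * t j) * (1 + τ * (t j - p))) by
    linear_combination hzero2)
  rw [eq_div_iff hden]
  exact key
end
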